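/- If vectors V^1_i, V^2_i in R^4 satisfy the recurrences V^1_{i+1} = a_i V^1_{i-1} + b_i V^2_{i-1} + V^1_i + c_i V^2_i and V^2_{i+1} = f_i V^1_{i-1} + g_i V^2_{i-1} + V^1_i + h_i V^2_i, the initial vectors (V^1_{-1}, V^2_{-1}, V^1_0, V^2_0) are linearly independent, and a_i g_i - b_i f_i ≠ 0 for all i, then (V^1_{i-1}, V^2_{i-1}, V^1_i, V^2_i) are linearly independent for all i ∈ Z. -/

import Mathlib

open Matrix in
lemma key_li {n : ℕ} (v w : Fin n → Fin n → ℝ) (M : Matrix (Fin n) (Fin n) ℝ)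
    (hdet : M.det ≠ 0) (hw : ∀ j, w j = ∑ k, M j k • v k) :
    LinearIndependent ℝ v ↔ LinearIndependent ℝ w := by
  have hM : IsUnit M.det := isUnit_iff_ne_zero.mpr hdet
  have hinv : M⁻¹ * M = 1 := Matrix.nonsing_inv_mul M hM
  have hinv' : M * M⁻¹ = 1 := Matrix.mul_nonsing_inv M hM
  have comb : ∀ (d : Fin n → ℝ), ∑ j, d j • w j = ∑ k, (d ᵥ* M) k • v k := by
    intro d
    simp only [hw, Finset.smul_sum, smul_smul]
    rw [Finset.sum_comm]
    refine Finset.sum_congr rfl fun k _ => ?_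
    simp [Matrix.vecMul, dotProduct, Finset.sum_smul]
  constructor
  · intro hv
    rw [Fintype.linearIndependent_iff] at hv ⊢
    intro d hd j
    have h0 : ∀ k, (d ᵥ* M) k = 0 := hv _ (by rw [← comb, hd])
    have : d ᵥ* M = 0 := funext h0
    have : d = 0 := by
      have := congrArg (· ᵥ* M⁻¹) this
      simpa [Matrix.vecMul_vecMul, hinv'] using this
    simp [this]
  · intro hwli
    rw [Fintype.linearIndependent_iff] at hwli ⊢
    intro c hc j
    have hd : ∀ j', (c ᵥ* M⁻¹) j' = 0 := by
      apply hwli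
      rw [comb, Matrix.vecMul_vecMul, hinv]
      simpa using hc
    have : c ᵥ* M⁻¹ = 0 := funext hd
    have : c = 0 := by
      have := congrArg (· ᵥ* M) this
      simpa [Matrix.vecMul_vecMul, hinv] using this
    simp [this]

theorem stmt_1 (V1 V2 : ℤ → Fin 4 → ℝ) (a b c f g h : ℤ → ℝ)
    (hr1 : ∀ i : ℤ, V1 (i + 1) = a i • V1 (i - 1) + b i • V2 (i - 1) + V1 i + c i • V2 i)
    (hr2 : ∀ i : ℤ, V2 (i + 1) = f i • V1 (i - 1) + g i • V2 (i - 1) + V1 i + h i • V2 i)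
    (hinit : LinearIndependent ℝ ![V1 (-1), V2 (-1), V1 0, V2 0])
    (hne : ∀ i : ℤ, a i * g i - b i * f i ≠ 0) :
    ∀ i : ℤ, LinearIndependent ℝ ![V1 (i - 1), V2 (i - 1), V1 i, V2 i] := by
  have step : ∀ i : ℤ, (LinearIndependent ℝ ![V1 (i - 1), V2 (i - 1), V1 i, V2 i] ↔
      LinearIndependent ℝ ![V1 i, V2 i, V1 (i + 1), V2 (i + 1)]) := by
    intro i
    refine key_li _ _ !![0,0,1,0; 0,0,0,1; a i, b i, 1, c i; f i, g i, 1, h i] ?_ ?_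
    · have hd : !![0,0,1,0; 0,0,0,1; a i, b i, 1, c i; f i, g i, 1, h i].det
          = a i * g i - b i * f i := by
        simp [Matrix.det_succ_row_zero, Fin.sum_univ_succ, Fin.succAbove]
        ring
      rw [hd]
      exact hne i
    · intro j
      fin_cases j <;>
        simp [Fin.sum_univ_four, hr1 i, hr2 i]
  intro i
  induction i using Int.induction_on with
  | zero => simpa using hinit
  | succ k ih =>
      have := (step k).mp ih
      have e1 : (k : ℤ) + 1 - 1 = k := by ring
      rw [e1]
      exact this
  | pred k ih =>
      have e1 : -(k : ℤ) - 1 + 1 = -k := by ring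
      refine (step (-k - 1)).mpr ?_
      rw [e1]
      exact ih
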